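/- Let A ⊆ ℝ^d be relatively dense and uniformly discrete, and suppose A - A ⊆ A + F for some finite set F ⊆ ℝ^d. Then A - A is uniformly discrete. -/

import Mathlib

open Pointwise

lemma separated_bounded_finite {X : Type*} [MetricSpace X] [ProperSpace X] {s : Set X} {r : ℝ}
    (hr : 0 < r) (hsep : ∀ a ∈ s, ∀ b ∈ s, a ≠ b → r ≤ dist a b)
    (hb : Bornology.IsBounded s) : s.Finite := by
  classical
  have htb : TotallyBounded s :=
    (hb.isCompact_closure.totallyBounded).subset subset_closure
  obtain ⟨t, htf, hcov⟩ := (Metric.totallyBounded_iff.mp htb) (r/2) (by linarith)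
  choose f hf1 hf2 using fun x (hx : x ∈ s) => Set.mem_iUnion₂.mp (hcov hx)
  set g : X → X := fun x => if hx : x ∈ s then f x hx else x with hg
  have hinj : Set.InjOn g s := by
    intro a ha b hb' hab
    by_contra hne
    have h1 := hf2 a ha
    have h2 := hf2 b hb'
    rw [Metric.mem_ball] at h1 h2
    have hd := hsep a ha b hb' hne
    have hga : g a = f a ha := dif_pos ha
    have hgb : g b = f b hb' := dif_pos hb'
    have : dist a b ≤ dist a (f a ha) + dist b (f b hb') := by
      rw [← hga, ← hgb, hab, hgb]
      exact dist_triangle_right a b (f b hb')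
    linarith
  apply Set.Finite.of_finite_image _ hinj
  apply htf.subset
  rintro _ ⟨x, hx, rfl⟩
  simpa [hg, dif_pos hx] using hf1 x hx

/-- If `A ⊆ ℝ^d` is relatively dense and uniformly discrete and `A - A ⊆ A + F`
for a finite set `F`, then `A - A` is uniformly discrete. -/
theorem diff_set_uniformly_discrete (d : ℕ) (A F : Set (Fin d → ℝ))
    (hdense : ∃ R > 0, ∀ x : Fin d → ℝ, ∃ a ∈ A, dist x a ≤ R)
    (hdisc : ∃ r > 0, ∀ a ∈ A, ∀ b ∈ A, a ≠ b → r ≤ dist a b)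
    (hF : F.Finite) (hAF : A - A ⊆ A + F) :
    ∃ r > 0, ∀ x ∈ A - A, ∀ y ∈ A - A, x ≠ y → r ≤ dist x y := by
  obtain ⟨r, hr, hsep⟩ := hdisc
  -- (A-A)-(A-A) ⊆ A + G with G = F + (F - F)
  set G : Set (Fin d → ℝ) := F + (F - F) with hG
  have hGfin : G.Finite := hF.add (hF.sub hF)
  have key : ∀ x ∈ A - A, ∀ y ∈ A - A, x - y ∈ A + G := by
    intro x hx y hy
    obtain ⟨a, ha, f, hf, hxf⟩ := hAF hx
    obtain ⟨b, hb, g, hg, hyg⟩ := hAF hy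
    have hab : a - b ∈ A - A := Set.sub_mem_sub ha hb
    obtain ⟨c, hc, h, hh, hch⟩ := hAF hab
    refine ⟨c, hc, h + (f - g), ⟨h, hh, f - g, Set.sub_mem_sub hf hg, rfl⟩, ?_⟩
    have : x - y = (a - b) + (f - g) := by rw [← hxf, ← hyg]; beta_reduce; abel
    rw [this, ← hch]; beta_reduce; abel
  -- S = (A+G) ∩ closed ball 1 is finite
  have hAGsep : ∀ p ∈ (A + G) ∩ Metric.closedBall 0 1, ∀ q ∈ (A + G) ∩ Metric.closedBall 0 1,
      True := fun _ _ _ _ => trivial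
  have hSfin : Set.Finite ((A + G) ∩ Metric.closedBall 0 1) := by
    have : (A + G) ∩ Metric.closedBall 0 1 ⊆ ⋃ g ∈ G, (fun a => a + g) '' A ∩ Metric.closedBall 0 1 := by
      rintro p ⟨⟨a, ha, g, hg, rfl⟩, hp⟩
      exact Set.mem_iUnion₂.mpr ⟨g, hg, ⟨a, ha, rfl⟩, hp⟩
    refine Set.Finite.subset (Set.Finite.biUnion hGfin fun g hg => ?_) this
    apply separated_bounded_finite hr
    · rintro _ ⟨⟨a, ha, rfl⟩, _⟩ _ ⟨⟨b, hb, rfl⟩, _⟩ hne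
      have : a ≠ b := fun h => hne (by rw [h])
      calc r ≤ dist a b := hsep a ha b hb this
        _ = dist (a + g) (b + g) := (dist_add_right a b g).symm
    · exact (Metric.isBounded_closedBall).subset Set.inter_subset_right
  -- candidate separation
  set S := ((A + G) ∩ Metric.closedBall 0 1) \ {0} with hS
  have hSfin' : S.Finite := hSfin.diff
  set T := (fun p : Fin d → ℝ => ‖p‖) '' S with hT
  have hTfin : T.Finite := hSfin'.image _
  by_cases hTe : T.Nonempty
  · obtain ⟨m, hmT, hmin⟩ := (show ∃ m ∈ T, ∀ m' ∈ T, id m' ≤ id m → id m = id m' by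
      obtain ⟨m, hm⟩ := hTfin.exists_minimalFor id T hTe
      exact ⟨m, hm.1, fun m' hm' h => le_antisymm (hm.2 hm' h) h⟩)
    obtain ⟨p, hpS, rfl⟩ := hmT
    have hp0 : p ≠ 0 := hpS.2
    have hmpos : 0 < ‖p‖ := norm_pos_iff.mpr hp0
    refine ⟨min ‖p‖ 1, lt_min hmpos one_pos, ?_⟩
    intro x hx y hy hxy
    have hz := key x hx y hy
    have hz0 : x - y ≠ 0 := sub_ne_zero.mpr hxy
    rw [dist_eq_norm]
    by_cases hball : ‖x - y‖ ≤ 1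
    · have hmem : x - y ∈ S := ⟨⟨hz, by simpa [Metric.mem_closedBall, dist_eq_norm] using hball⟩, hz0⟩
      have : ‖x - y‖ ∈ T := ⟨x - y, hmem, rfl⟩
      have := hmin ‖x - y‖ this
      rcases le_or_gt ‖p‖ ‖x - y‖ with h | h
      · exact le_trans (min_le_left _ _) h
      · simp only [id] at this
        exact absurd (this h.le) (ne_of_gt h)
    · exact le_trans (min_le_right _ _) (le_of_not_ge hball)
  · refine ⟨1, one_pos, ?_⟩
    intro x hx y hy hxy
    have hz := key x hx y hy
    have hz0 : x - y ≠ 0 := sub_ne_zero.mpr hxy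
    rw [dist_eq_norm]
    by_contra hlt
    push_neg at hlt
    exact hTe ⟨‖x - y‖, ⟨x - y, ⟨⟨hz, by simpa [Metric.mem_closedBall, dist_eq_norm] using hlt.le⟩, hz0⟩, rfl⟩⟩
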